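/- If X is a relevant variable with deg(X) < q − 1 (equivalently, there exists B ⊆ V \ {X} with |B| ≤ q − 1 and I(X; Y | B) > 0), then the asymptotic random-subspace importance Imp(X) = Σ_{k=0}^{q−1} (1/C(p,k)) Σ_{B ∈ P_k(V \ {X})} I(X; Y | B) is strictly positive; conversely if deg(X) ≥ q then Imp(X) = 0. In particular, for q = p this importance is positive iff X is relevant. -/
import Mathlib


open Finset

/-- For the asymptotic random-subspace importance
`Imp(X) = Σ_{k=0}^{q−1} (1/C(p,k)) Σ_{B ∈ P_k(V\{X})} I(X;Y|B)`,
(i) if `X` is relevant with a conditioning set of size at most `q − 1`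
(i.e. `deg(X) ≤ q − 1`), then `Imp(X) > 0`;
(ii) if `deg(X) ≥ q` (no conditioning set of size `< q` gives positive CMI),
then `Imp(X) = 0`;
(iii) for `q = p`, `Imp(X) > 0` iff `X` is relevant.
Here `I X B` abstractly denotes the (nonnegative) conditional mutual information
`I(X;Y|B)`, and the variable set `V` is a finite type `ι` of cardinality `p`. -/
theorem rs_importance_positive_iff_low_degree
    {ι : Type*} [Fintype ι] [DecidableEq ι]
    (p q : ℕ) (hp : Fintype.card ι = p) (hq : 1 ≤ q) (hqp : q ≤ p)
    (I : ι → Finset ι → ℝ) (hI : ∀ X B, 0 ≤ I X B)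
    (X : ι) (Imp : ℝ)
    (hImp : Imp = ∑ k ∈ Finset.range q, (1 / (p.choose k : ℝ)) *
        ∑ B ∈ (Finset.univ.erase X).powersetCard k, I X B) :
    ((∃ B ⊆ Finset.univ.erase X, B.card ≤ q - 1 ∧ 0 < I X B) → 0 < Imp) ∧
    ((∀ B ⊆ Finset.univ.erase X, B.card < q → I X B = 0) → Imp = 0) ∧
    (q = p → (0 < Imp ↔ ∃ B ⊆ Finset.univ.erase X, 0 < I X B)) := by
  subst hImp
  have hterm : ∀ k ∈ Finset.range q, 0 ≤ (1 / (p.choose k : ℝ)) *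
      ∑ B ∈ (Finset.univ.erase X).powersetCard k, I X B := by
    intro k _
    apply mul_nonneg (by positivity)
    exact Finset.sum_nonneg fun B _ => hI X B
  have hpos : ∀ B ⊆ Finset.univ.erase X, B.card ≤ q - 1 → 0 < I X B →
      0 < ∑ k ∈ Finset.range q, (1 / (p.choose k : ℝ)) *
        ∑ B ∈ (Finset.univ.erase X).powersetCard k, I X B := by
    intro B hB hcard hIB
    apply Finset.sum_pos' hterm
    have hklt : B.card < q := by omega
    refine ⟨B.card, Finset.mem_range.2 hklt, ?_⟩
    have hch : 0 < (p.choose B.card : ℝ) := by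
      have : B.card ≤ p := le_trans hklt.le hqp
      exact_mod_cast Nat.choose_pos this
    apply mul_pos (by positivity)
    have hmem : B ∈ (Finset.univ.erase X).powersetCard B.card :=
      Finset.mem_powersetCard.2 ⟨hB, rfl⟩
    exact lt_of_lt_of_le hIB (Finset.single_le_sum (fun b _ => hI X b) hmem)
  have hzero : (∀ B ⊆ Finset.univ.erase X, B.card < q → I X B = 0) →
      (∑ k ∈ Finset.range q, (1 / (p.choose k : ℝ)) *
        ∑ B ∈ (Finset.univ.erase X).powersetCard k, I X B) = 0 := by
    intro h
    apply Finset.sum_eq_zero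
    intro k hk
    have : ∑ B ∈ (Finset.univ.erase X).powersetCard k, I X B = 0 := by
      apply Finset.sum_eq_zero
      intro B hB
      obtain ⟨hsub, hcard⟩ := Finset.mem_powersetCard.1 hB
      exact h B hsub (hcard ▸ Finset.mem_range.1 hk)
    rw [this, mul_zero]
  refine ⟨fun ⟨B, hB, hc, hIB⟩ => hpos B hB hc hIB, hzero, fun hqe => ?_⟩
  constructor
  · intro hIm
    by_contra hno
    push_neg at hno
    have : ∀ B ⊆ Finset.univ.erase X, B.card < q → I X B = 0 := fun B hB _ =>
      le_antisymm (hno B hB) (hI X B)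
    exact absurd (hzero this) (ne_of_gt hIm)
  · rintro ⟨B, hB, hIB⟩
    apply hpos B hB ?_ hIB
    have := Finset.card_le_card hB
    rw [Finset.card_erase_of_mem (Finset.mem_univ X), Finset.card_univ, hp] at this
    omega
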